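/- For every natural number K, there are only finitely many bubble trees of total charge K (up to isomorphism). Concretely, encoding rooted weighted trees as the inductive type whose elements consist of a root weight in ℕ together with a finite multiset of subtrees, the set of bubble trees of total charge K is finite. -/

import Mathlib

inductive RTree : Type where
  | node : ℕ → List RTree → RTree

namespace RTree

/-- total charge: sum of all weights in the tree -/
def totalCharge : RTree → ℕ
  | .node w c => w + (c.attach.map fun t => totalCharge t.1).sum
decreasing_by
  have := List.sizeOf_lt_of_mem t.2
  simp only [RTree.node.sizeOf_spec]
  omega

/-- number of vertices -/
def numVertices : RTree → ℕ
  | .node _ c => 1 + (c.attach.map fun t => numVertices t.1).sum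
decreasing_by
  have := List.sizeOf_lt_of_mem t.2
  simp only [RTree.node.sizeOf_spec]
  omega

/-- bubble tree condition -/
inductive IsBubble : RTree → Prop where
  | node (w : ℕ) (c : List RTree)
      (hvert : w ≠ 0 ∨ (2 ≤ c.length ∧ ∀ t ∈ c, 0 < totalCharge t))
      (hc : ∀ t ∈ c, IsBubble t) : IsBubble (.node w c)

mutual
  /-- isomorphism of rooted weighted trees (children regarded as a multiset) -/
  inductive TEquiv : RTree → RTree → Prop where
    | node (w : ℕ) {c₁ c₂ : List RTree} (h : LEquiv c₁ c₂) :
        TEquiv (.node w c₁) (.node w c₂)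

  /-- permutation of lists of trees up to `TEquiv` -/
  inductive LEquiv : List RTree → List RTree → Prop where
    | nil : LEquiv [] []
    | cons {t₁ t₂ : RTree} {l₁ l₂ : List RTree} (h : TEquiv t₁ t₂) (hl : LEquiv l₁ l₂) :
        LEquiv (t₁ :: l₁) (t₂ :: l₂)
    | swap (t₁ t₂ : RTree) (l : List RTree) : LEquiv (t₁ :: t₂ :: l) (t₂ :: t₁ :: l)
    | trans {l₁ l₂ l₃ : List RTree} (h₁ : LEquiv l₁ l₂) (h₂ : LEquiv l₂ l₃) : LEquiv l₁ l₃
end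

lemma totalCharge_node (w : ℕ) (c : List RTree) :
    totalCharge (.node w c) = w + (c.map totalCharge).sum := by
  rw [totalCharge]
  congr 1
  rw [List.attach_map_val]

lemma numVertices_node (w : ℕ) (c : List RTree) :
    numVertices (.node w c) = 1 + (c.map numVertices).sum := by
  rw [numVertices]
  congr 1
  rw [List.attach_map_val]

lemma one_le_numVertices : ∀ T : RTree, 1 ≤ numVertices T := by
  rintro ⟨w, c⟩
  rw [numVertices_node]
  omega

lemma sum_aux (c : List RTree) (h : ∀ t ∈ c, numVertices t + 1 ≤ 2 * totalCharge t) :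
    (c.map numVertices).sum + c.length ≤ 2 * (c.map totalCharge).sum := by
  induction c with
  | nil => simp
  | cons t l ih =>
    have h1 := h t (by simp)
    have h2 := ih (fun x hx => h x (by simp [hx]))
    simp only [List.map_cons, List.sum_cons, List.length_cons]
    omega

lemma numVertices_le (T : RTree) (h : IsBubble T) :
    numVertices T + 1 ≤ 2 * totalCharge T := by
  induction h with
  | node w c hvert hc ih =>
    rw [numVertices_node, totalCharge_node]
    have key := sum_aux c ih
    rcases hvert with hw | ⟨hlen, _⟩
    · have : 1 ≤ w := Nat.one_le_iff_ne_zero.2 hw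
      omega
    · omega

/-- The set of trees with bounded charge and bounded number of vertices. -/
def bdd (K n : ℕ) : Set RTree := {T | totalCharge T ≤ K ∧ numVertices T ≤ n}

lemma bdd_finite (K : ℕ) : ∀ n, (bdd K n).Finite := by
  intro n
  induction n with
  | zero =>
    apply Set.Finite.subset Set.finite_empty
    rintro T ⟨-, hv⟩
    exact absurd hv (by have := one_le_numVertices T; omega)
  | succ n ih =>
    haveI : Finite (bdd K n) := ih.to_subtype
    set L : Set (List RTree) := {l | l.length ≤ n ∧ ∀ t ∈ l, t ∈ bdd K n} with hL
    have hLfin : L.Finite := by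
      apply Set.Finite.subset
        (((List.finite_length_le (bdd K n) n).image (List.map Subtype.val)))
      rintro l ⟨hlen, hmem⟩
      refine ⟨l.attachWith (· ∈ bdd K n) hmem, ?_, ?_⟩
      · simpa using hlen
      · simp
    apply Set.Finite.subset (((Set.finite_Iic K).prod hLfin).image
      (fun p : ℕ × List RTree => RTree.node p.1 p.2))
    rintro ⟨w, c⟩ ⟨hch, hv⟩
    rw [totalCharge_node] at hch
    rw [numVertices_node] at hv
    have hlen : c.length ≤ (c.map numVertices).sum := by
      have := List.length_le_sum_of_one_le (c.map numVertices) (by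
        intro x hx
        obtain ⟨t, _, rfl⟩ := List.mem_map.1 hx
        exact one_le_numVertices t)
      simpa using this
    refine ⟨(w, c), ⟨?_, ?_, ?_⟩, rfl⟩
    · simp only [Set.mem_Iic]; omega
    · show c.length ≤ n
      omega
    · intro t ht
      constructor
      · have := List.single_le_sum (l := c.map totalCharge) (fun _ _ => Nat.zero_le _)
          (totalCharge t) (List.mem_map_of_mem (f := totalCharge) ht)
        omega
      · have := List.single_le_sum (l := c.map numVertices) (fun _ _ => Nat.zero_le _)
          (numVertices t) (List.mem_map_of_mem (f := numVertices) ht)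
        omega

end RTree

theorem finitely_many_bubble_trees (K : ℕ) :
    {q : Quot RTree.TEquiv |
      ∃ T : RTree, RTree.IsBubble T ∧ RTree.totalCharge T = K ∧ Quot.mk RTree.TEquiv T = q}.Finite := by
  apply Set.Finite.subset ((RTree.bdd_finite K (2 * K)).image (Quot.mk RTree.TEquiv))
  rintro q ⟨T, hB, hK, rfl⟩
  have h := RTree.numVertices_le T hB
  exact ⟨T, ⟨by omega, by omega⟩, rfl⟩
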